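/- If the word b₁...bₙ immediately follows a₁...aₙ in the recursively defined full Gray code of words (1 ≤ aᵢ ≤ 2i−1), then there is exactly one index i with bᵢ = aᵢ ± 1 and b_j = a_j for all j ≠ i. -/

import Mathlib

/-- The full Gray code of words: for `n = 0` the single empty word; words of
the length-`n` code at even (0-indexed, i.e. odd 1-indexed) positions are
extended by last letters `1, 2, …, 2(n+1)-1` in increasing order, those at odd
(0-indexed) positions by the same last letters in decreasing order. -/
def grayCode : ℕ → List (List ℕ)
  | 0 => [[]]
  | n+1 =>
      (((grayCode n).zipIdx.map Prod.swap).map (fun p =>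
        if p.1 % 2 = 0 then
          (List.range (2*n + 1)).map (fun j => p.2 ++ [j + 1])
        else
          ((List.range (2*n + 1)).map (fun j => p.2 ++ [j + 1])).reverse)).flatten

/-- The 1-indexed `i`-th letter of a word. -/
def wd (a : List ℕ) (i : ℕ) : ℕ := a.getD (i - 1) 0

/-- A word `a₁…aₙ` is arc-disconnected if there is a `k ≥ 2` with
`a_k = 2k-1` and `a_j ≥ 2k-1` for all `j > k`. -/
def ArcDiscL (a : List ℕ) : Prop :=
  ∃ k, 2 ≤ k ∧ k ≤ a.length ∧ wd a k = 2*k - 1 ∧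
    ∀ j, k < j → j ≤ a.length → 2*k - 1 ≤ wd a j

/-- Adjacency: differ in exactly one position by ±1. -/
def Adj (n : ℕ) (a b : List ℕ) : Prop :=
  ∃ i, 1 ≤ i ∧ i ≤ n ∧ (wd b i = wd a i + 1 ∨ wd a i = wd b i + 1) ∧
    ∀ j, j ≠ i → wd b j = wd a j

lemma Adj.symm {n : ℕ} {a b : List ℕ} (h : Adj n a b) : Adj n b a := by
  obtain ⟨i, h1, h2, h3, h4⟩ := h
  exact ⟨i, h1, h2, h3.symm, fun j hj => (h4 j hj).symm⟩

lemma snd_mem_of_mem_enum {α : Type*} {l : List α} {p : ℕ × α} (h : p ∈ l.zipIdx.map Prod.swap) : p.2 ∈ l := by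
  obtain ⟨⟨x, i⟩, hq, rfl⟩ := List.mem_map.1 h
  obtain ⟨h1, h2⟩ := List.mem_zipIdx' hq
  simp only [Prod.swap_prod_mk]
  rw [h2]
  exact List.getElem_mem h1

lemma wd_zero (a : List ℕ) : wd a 0 = wd a 1 := rfl

lemma wd_append_of_le {p : List ℕ} {x j : ℕ} (h1 : 1 ≤ j) (h2 : j ≤ p.length) :
    wd (p ++ [x]) j = wd p j :=
  List.getD_append _ _ _ _ (by omega)

lemma wd_append_last {p : List ℕ} {x n : ℕ} (hp : p.length = n) :
    wd (p ++ [x]) (n + 1) = x := by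
  unfold wd
  rw [Nat.add_sub_cancel, ← hp, List.getD_append_right _ _ _ _ le_rfl, Nat.sub_self]
  rfl

lemma wd_append_gt {p : List ℕ} {x j : ℕ} (h : p.length + 1 < j) : wd (p ++ [x]) j = 0 :=
  List.getD_eq_default _ _ (by simp; omega)

lemma grayCode_length : ∀ n, ∀ a ∈ grayCode n, a.length = n := by
  intro n
  induction n with
  | zero => simp [grayCode]
  | succ n ih =>
    intro a ha
    rw [grayCode, List.mem_flatten] at ha
    obtain ⟨l, hl, hal⟩ := ha
    obtain ⟨p, hp, rfl⟩ := List.mem_map.1 hl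
    have hp2 : p.2.length = n := ih _ (snd_mem_of_mem_enum hp)
    split at hal
    · obtain ⟨j, _, rfl⟩ := List.mem_map.1 hal
      simp [hp2]
    · rw [List.mem_reverse] at hal
      obtain ⟨j, _, rfl⟩ := List.mem_map.1 hal
      simp [hp2]

lemma adj_append_same {n : ℕ} {p q : List ℕ} (hp : p.length = n) (hq : q.length = n)
    (x : ℕ) (h : Adj n p q) : Adj (n+1) (p ++ [x]) (q ++ [x]) := by
  obtain ⟨i, hi1, hin, hpm, hfix⟩ := h
  have hn1 : 1 ≤ n := le_trans hi1 hin
  refine ⟨i, hi1, by omega, ?_, ?_⟩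
  · rwa [wd_append_of_le hi1 (by omega), wd_append_of_le hi1 (by omega)]
  · intro j hj
    rcases Nat.lt_or_ge j 1 with h0 | h1
    · have hj0 : j = 0 := by omega
      subst hj0
      have h1q : wd q 1 = wd p 1 := by
        rcases eq_or_ne i 1 with rfl | hne
        · have := hfix 0 (by omega)
          rwa [wd_zero q, wd_zero p] at this
        · exact hfix 1 (Ne.symm hne)
      rw [wd_zero, wd_zero, wd_append_of_le le_rfl (by omega),
        wd_append_of_le le_rfl (by omega), h1q]
    · rcases Nat.lt_or_ge n j with hgt | hle
      · rcases Nat.lt_or_ge (n+1) j with hgt2 | hle2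
        · rw [wd_append_gt (by omega), wd_append_gt (by omega)]
        · have hj1 : j = n + 1 := by omega
          subst hj1
          rw [wd_append_last hp, wd_append_last hq]
      · rw [wd_append_of_le h1 (by omega), wd_append_of_le h1 (by omega)]
        exact hfix j hj

lemma adj_step {n : ℕ} {p : List ℕ} (hp : p.length = n) (hn : 1 ≤ n) (x : ℕ) :
    Adj (n+1) (p ++ [x]) (p ++ [x+1]) := by
  refine ⟨n+1, by omega, le_rfl, Or.inl ?_, ?_⟩
  · rw [wd_append_last hp, wd_append_last hp]
  · intro j hj
    rcases Nat.lt_or_ge j 1 with h0 | h1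
    · have hj0 : j = 0 := by omega
      subst hj0
      rw [wd_zero, wd_zero, wd_append_of_le le_rfl (by omega),
        wd_append_of_le le_rfl (by omega)]
    · rcases Nat.lt_or_ge n j with hgt | hle
      · rw [wd_append_gt (by omega), wd_append_gt (by omega)]
      · rw [wd_append_of_le h1 (by omega), wd_append_of_le h1 (by omega)]

lemma chain_block {n : ℕ} {p : List ℕ} (hp : p.length = n) :
    List.Chain' (Adj (n+1)) ((List.range (2*n+1)).map (fun j => p ++ [j+1])) := by
  unfold List.Chain'
  rw [List.isChain_map, List.isChain_iff_getElem]
  intro i h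
  rw [List.length_range] at h
  rw [List.getElem_range, List.getElem_range]
  exact adj_step hp (by omega) (i+1)

lemma B_getLast? (p : List ℕ) (k : ℕ) :
    ((List.range (k+1)).map (fun j => p ++ [j+1])).getLast? = some (p ++ [k+1]) := by
  rw [List.range_succ, List.map_append]
  simp

lemma B_head? (p : List ℕ) (k : ℕ) :
    ((List.range (k+1)).map (fun j => p ++ [j+1])).head? = some (p ++ [1]) := by
  rw [List.range_succ_eq_map]
  simp

lemma chain_gray : ∀ n, List.Chain' (Adj n) (grayCode n) := by
  intro n
  induction n with
  | zero => exact List.isChain_singleton _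
  | succ n ih =>
    rw [grayCode]
    have hne : [] ∉ (((grayCode n).zipIdx.map Prod.swap).map (fun p =>
        if p.1 % 2 = 0 then
          (List.range (2*n + 1)).map (fun j => p.2 ++ [j + 1])
        else
          ((List.range (2*n + 1)).map (fun j => p.2 ++ [j + 1])).reverse)) := by
      intro h
      obtain ⟨p, _, hp⟩ := List.mem_map.1 h
      split at hp <;> simp at hp
    unfold List.Chain'
    rw [List.isChain_flatten hne]
    constructor
    · intro l hl
      obtain ⟨p, hpmem, rfl⟩ := List.mem_map.1 hl
      have hp2 : p.2.length = n := grayCode_length n _ (snd_mem_of_mem_enum hpmem)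
      split
      · exact chain_block hp2
      · exact List.isChain_reverse.mpr ((chain_block hp2).imp fun a b h => h.symm)
    · rw [List.isChain_map, List.isChain_iff_getElem]
      intro i h
      have hlen : ((grayCode n).zipIdx.map Prod.swap).length = (grayCode n).length := by simp
      have hi : i < (grayCode n).length := by omega
      have hi1 : i + 1 < (grayCode n).length := by omega
      simp only [List.getElem_map, List.getElem_zipIdx, Prod.swap_prod_mk, Nat.zero_add]
      have hp2 : (grayCode n)[i].length = n := grayCode_length n _ (List.getElem_mem hi)
      have hq2 : (grayCode n)[i+1].length = n := grayCode_length n _ (List.getElem_mem hi1)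
      have hadj : Adj n (grayCode n)[i] (grayCode n)[i+1] := by
        have := List.isChain_iff_getElem.1 ih i (by omega)
        simpa using this
      rcases Nat.mod_two_eq_zero_or_one i with h2 | h2
      · rw [if_pos (by simpa using h2), if_neg (by omega)]
        rw [B_getLast?, List.head?_reverse, B_getLast?]
        simp only [Option.mem_def, Option.some.injEq]
        rintro x rfl y rfl
        exact adj_append_same hp2 hq2 _ hadj
      · rw [if_neg (by omega), if_pos (by omega)]
        rw [List.getLast?_reverse, B_head?, B_head?]
        simp only [Option.mem_def, Option.some.injEq]
        rintro x rfl y rfl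
        exact adj_append_same hp2 hq2 _ hadj

theorem stmt_10 (n m : ℕ) (a b : List ℕ)
    (ha : (grayCode n)[m]? = some a) (hb : (grayCode n)[m+1]? = some b) :
    ∃ i, 1 ≤ i ∧ i ≤ n ∧ (wd b i = wd a i + 1 ∨ wd a i = wd b i + 1) ∧
      ∀ j, j ≠ i → wd b j = wd a j := by
  rw [List.getElem?_eq_some_iff] at ha hb
  obtain ⟨hma, rfl⟩ := ha
  obtain ⟨hmb, rfl⟩ := hb
  exact List.isChain_iff_getElem.1 (chain_gray n) m (by omega)
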